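/- Let G = (V,E) be a 3-sparse, 5-regular graph and let X, Y ⊂ V be 8-sets (i(X) = 3|X| - 8, i(Y) = 3|Y| - 8) with |X ∩ Y| ≥ 3. Then d(X,Y) ≤ 4, and X ∪ Y is an m-set and X ∩ Y is an n-set with m, n ≥ 6 and m + n = 16 - d(X,Y). -/

import Mathlib

open Finset

variable {V : Type*} [Fintype V] [DecidableEq V]

/-- `i(X)`: the number of edges of `G` with both endpoints in `X`. -/
def edgesWithin (G : SimpleGraph V) [DecidableRel G.Adj] (X : Finset V) : ℕ :=
  ((X ×ˢ X).filter fun p => G.Adj p.1 p.2).card / 2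

/-- `d(X,Y)`: the number of edges of `G` with one endpoint in `X \ Y` and the other in `Y \ X`. -/
def edgesBetween (G : SimpleGraph V) [DecidableRel G.Adj] (X Y : Finset V) : ℕ :=
  (((X \ Y) ×ˢ (Y \ X)).filter fun p => G.Adj p.1 p.2).card

/-- `G` is 3-sparse: `i(X) ≤ 3|X| - 6` for all `X` with `|X| ≥ 3`. -/
def Sparse3 (G : SimpleGraph V) [DecidableRel G.Adj] : Prop :=
  ∀ X : Finset V, 3 ≤ X.card → edgesWithin G X + 6 ≤ 3 * X.card

/-- The set of common neighbours of `u` and `v`. -/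
def commonNbrs (G : SimpleGraph V) [DecidableRel G.Adj] (u v : V) : Finset V :=
  Finset.univ.filter fun t => G.Adj u t ∧ G.Adj v t

lemma two_mul_edgesWithin (G : SimpleGraph V) [DecidableRel G.Adj] (A : Finset V) :
    2 * edgesWithin G A = ((A ×ˢ A).filter fun p => G.Adj p.1 p.2).card := by
  classical
  set e := Fintype.equivFin V with he
  set S := (A ×ˢ A).filter fun p => G.Adj p.1 p.2 with hS
  have hsplit : S = (S.filter fun p => e p.1 < e p.2) ∪ (S.filter fun p => ¬ e p.1 < e p.2) :=
    (filter_union_filter_not_eq _ _).symm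
  have hdisj : Disjoint (S.filter fun p => e p.1 < e p.2) (S.filter fun p => ¬ e p.1 < e p.2) :=
    disjoint_filter_filter_not _ _ _
  have hcardeq : (S.filter fun p => ¬ e p.1 < e p.2).card
      = (S.filter fun p => e p.1 < e p.2).card := by
    apply Finset.card_nbij' (fun p => Prod.swap p) (fun p => Prod.swap p)
    · intro p hp
      simp only [hS, Finset.mem_coe, mem_filter, mem_product, Prod.fst_swap, Prod.snd_swap] at hp ⊢
      have hne : e p.2 ≠ e p.1 := fun h => hp.1.2.ne' (e.injective h)
      exact ⟨⟨⟨hp.1.1.2, hp.1.1.1⟩, hp.1.2.symm⟩, lt_of_le_of_ne (not_lt.mp hp.2) hne⟩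
    · intro p hp
      simp only [hS, Finset.mem_coe, mem_filter, mem_product, Prod.fst_swap, Prod.snd_swap] at hp ⊢
      exact ⟨⟨⟨hp.1.1.2, hp.1.1.1⟩, hp.1.2.symm⟩, not_lt.mpr (le_of_lt hp.2)⟩
    · intro p _; simp
    · intro p _; simp
  have hScard : S.card = 2 * (S.filter fun p => e p.1 < e p.2).card := by
    conv_lhs => rw [hsplit]
    rw [card_union_of_disjoint hdisj, hcardeq]; omega
  have : edgesWithin G A = (S.filter fun p => e p.1 < e p.2).card := by
    unfold edgesWithin; rw [← hS, hScard]; omega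
  rw [this, ← hScard]

lemma card_eq_sum_ind (G : SimpleGraph V) [DecidableRel G.Adj] (A B : Finset V) :
    ((A ×ˢ B).filter fun p => G.Adj p.1 p.2).card
      = ∑ p : V × V, (if p.1 ∈ A ∧ p.2 ∈ B ∧ G.Adj p.1 p.2 then 1 else 0) := by
  rw [show ((A ×ˢ B).filter fun p => G.Adj p.1 p.2)
      = Finset.univ.filter (fun p : V × V => p.1 ∈ A ∧ p.2 ∈ B ∧ G.Adj p.1 p.2) by
    ext p; simp [Finset.mem_product, and_assoc]]
  rw [Finset.card_filter]

lemma key_identity (G : SimpleGraph V) [DecidableRel G.Adj] (X Y : Finset V) :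
    edgesWithin G (X ∪ Y) + edgesWithin G (X ∩ Y)
      = edgesWithin G X + edgesWithin G Y + edgesBetween G X Y := by
  have hswap : (((Y \ X) ×ˢ (X \ Y)).filter fun p => G.Adj p.1 p.2).card
      = edgesBetween G X Y := by
    unfold edgesBetween
    apply Finset.card_nbij' (fun p => Prod.swap p) (fun p => Prod.swap p)
    · intro p hp
      simp only [Finset.mem_coe, mem_filter, mem_product, Prod.fst_swap, Prod.snd_swap] at hp ⊢
      exact ⟨⟨hp.1.2, hp.1.1⟩, hp.2.symm⟩
    · intro p hp
      simp only [Finset.mem_coe, mem_filter, mem_product, Prod.fst_swap, Prod.snd_swap] at hp ⊢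
      exact ⟨⟨hp.1.2, hp.1.1⟩, hp.2.symm⟩
    · intro p _; simp
    · intro p _; simp
  have hdouble : 2 * edgesWithin G (X ∪ Y) + 2 * edgesWithin G (X ∩ Y)
      = 2 * edgesWithin G X + 2 * edgesWithin G Y + 2 * edgesBetween G X Y := by
    rw [two_mul_edgesWithin, two_mul_edgesWithin, two_mul_edgesWithin, two_mul_edgesWithin]
    have : 2 * edgesBetween G X Y = edgesBetween G X Y
        + (((Y \ X) ×ˢ (X \ Y)).filter fun p => G.Adj p.1 p.2).card := by
      rw [hswap]; ring
    rw [this]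
    unfold edgesBetween
    rw [card_eq_sum_ind, card_eq_sum_ind, card_eq_sum_ind, card_eq_sum_ind,
        card_eq_sum_ind, card_eq_sum_ind]
    rw [← Finset.sum_add_distrib, ← Finset.sum_add_distrib, ← Finset.sum_add_distrib,
        ← Finset.sum_add_distrib]
    apply Finset.sum_congr rfl
    intro p _
    by_cases h1 : p.1 ∈ X <;> by_cases h2 : p.1 ∈ Y <;>
      by_cases h3 : p.2 ∈ X <;> by_cases h4 : p.2 ∈ Y <;>
      by_cases h5 : G.Adj p.1 p.2 <;>
      simp [h1, h2, h3, h4, h5, Finset.mem_union, Finset.mem_inter, Finset.mem_sdiff]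
  omega

theorem stmt10_aux (G : SimpleGraph V) [DecidableRel G.Adj]
    (hsp : ∀ X : Finset V, 3 ≤ X.card → edgesWithin G X + 6 ≤ 3 * X.card)
    (X Y : Finset V)
    (hX : edgesWithin G X + 8 = 3 * X.card)
    (hY : edgesWithin G Y + 8 = 3 * Y.card)
    (hXY : 3 ≤ (X ∩ Y).card) :
    edgesBetween G X Y ≤ 4 ∧
    ∃ m n : ℕ, 6 ≤ m ∧ 6 ≤ n ∧ m + n + edgesBetween G X Y = 16 ∧
      edgesWithin G (X ∪ Y) + m = 3 * (X ∪ Y).card ∧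
      edgesWithin G (X ∩ Y) + n = 3 * (X ∩ Y).card := by
  have hid := key_identity G X Y
  have hcard : (X ∪ Y).card + (X ∩ Y).card = X.card + Y.card :=
    Finset.card_union_add_card_inter X Y
  have hXle : 3 ≤ X.card := by omega
  have hUle : 3 ≤ (X ∪ Y).card :=
    le_trans hXle (Finset.card_le_card Finset.subset_union_left)
  have hspU := hsp (X ∪ Y) hUle
  have hspI := hsp (X ∩ Y) hXY
  refine ⟨by omega, 3 * (X ∪ Y).card - edgesWithin G (X ∪ Y),
    3 * (X ∩ Y).card - edgesWithin G (X ∩ Y), by omega, by omega, by omega, by omega, by omega⟩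

theorem stmt10 (G : SimpleGraph V) [DecidableRel G.Adj]
    (hreg : ∀ v, G.degree v = 5) (hsp : Sparse3 G)
    (X Y : Finset V)
    (hX : edgesWithin G X + 8 = 3 * X.card)
    (hY : edgesWithin G Y + 8 = 3 * Y.card)
    (hXY : 3 ≤ (X ∩ Y).card) :
    edgesBetween G X Y ≤ 4 ∧
    ∃ m n : ℕ, 6 ≤ m ∧ 6 ≤ n ∧ m + n + edgesBetween G X Y = 16 ∧
      edgesWithin G (X ∪ Y) + m = 3 * (X ∪ Y).card ∧
      edgesWithin G (X ∩ Y) + n = 3 * (X ∩ Y).card := by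
  exact stmt10_aux G hsp X Y hX hY hXY
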